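/- Let P be a full-dimensional rational convex polytope in ℝ^d containing 0 in its interior. Then the polar dual P* is a lattice polytope if and only if for every natural number n, the number of lattice points in nP equals the number of lattice points in the interior of (n+1)P. -/

import Mathlib

open scoped RealInnerProductSpace BigOperators Pointwise

noncomputable section

/-- A point of `ℝ^d` with integer coordinates. -/
def IsLatticePoint {d : ℕ} (x : EuclideanSpace ℝ (Fin d)) : Prop :=
  ∀ i, ∃ z : ℤ, x i = (z : ℝ)

/-- A point of `ℝ^d` with rational coordinates. -/
def IsRationalPoint {d : ℕ} (x : EuclideanSpace ℝ (Fin d)) : Prop :=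
  ∀ i, ∃ q : ℚ, x i = (q : ℝ)

/-- The polar dual `S* = {y : ⟨x, y⟩ ≤ 1 for all x ∈ S}`. -/
def polarDual {d : ℕ} (S : Set (EuclideanSpace ℝ (Fin d))) :
    Set (EuclideanSpace ℝ (Fin d)) :=
  {y | ∀ x ∈ S, ⟪x, y⟫ ≤ 1}

def suppF {d : ℕ} (S : Set (EuclideanSpace ℝ (Fin d))) (x : EuclideanSpace ℝ (Fin d)) : ℝ :=
  sSup ((fun y => ⟪x, y⟫) '' S)

section Helpers
variable {d : ℕ} {P : Set (EuclideanSpace ℝ (Fin d))} {x : EuclideanSpace ℝ (Fin d)}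

lemma inner_eq_sum (x y : EuclideanSpace ℝ (Fin d)) : ⟪x, y⟫ = ∑ i, x i * y i := by
  simp [PiLp.inner_apply, RCLike.inner_apply, conj_trivial]
  exact Finset.sum_congr rfl fun i _ => mul_comm _ _

lemma IsLatticePoint.inner_int {x y : EuclideanSpace ℝ (Fin d)} (hx : IsLatticePoint x)
    (hy : IsLatticePoint y) : ∃ z : ℤ, ⟪x, y⟫ = (z : ℝ) := by
  choose zx hzx using hx
  choose zy hzy using hy
  refine ⟨∑ i, zx i * zy i, ?_⟩
  rw [inner_eq_sum]
  push_cast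
  exact Finset.sum_congr rfl fun i _ => by rw [hzx, hzy]

lemma isLatticePoint_zero : IsLatticePoint (0 : EuclideanSpace ℝ (Fin d)) :=
  fun i => ⟨0, by simp⟩

lemma IsLatticePoint.add {x y : EuclideanSpace ℝ (Fin d)} (hx : IsLatticePoint x)
    (hy : IsLatticePoint y) : IsLatticePoint (x + y) := by
  intro i
  obtain ⟨a, ha⟩ := hx i; obtain ⟨b, hb⟩ := hy i
  exact ⟨a + b, by simp [ha, hb]⟩

lemma IsLatticePoint.nsmul {x : EuclideanSpace ℝ (Fin d)} (hx : IsLatticePoint x) (n : ℕ) :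
    IsLatticePoint ((n : ℝ) • x) := by
  intro i
  obtain ⟨a, ha⟩ := hx i
  exact ⟨n * a, by rw [PiLp.smul_apply, ha, smul_eq_mul]; push_cast; ring⟩

lemma isLatticePoint_single (i : Fin d) :
    IsLatticePoint (EuclideanSpace.single i (1 : ℝ)) := by
  intro j
  by_cases h : j = i
  · subst h; exact ⟨1, by simp⟩
  · exact ⟨0, by simp [EuclideanSpace.single_apply, h]⟩

lemma finite_lattice_of_bounded {s : Set (EuclideanSpace ℝ (Fin d))}
    (hs : Bornology.IsBounded s) : {x ∈ s | IsLatticePoint x}.Finite := by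
  obtain ⟨R, hR⟩ := hs.subset_ball 0
  classical
  set T : Set (Fin d → ℤ) := {g | ∀ i, |g i| ≤ ⌈R⌉} with hT
  have hTfin : T.Finite := by
    have : T ⊆ Set.pi Set.univ (fun _ : Fin d => Set.Icc (-⌈R⌉) ⌈R⌉) := by
      intro g hg
      intro i _
      exact abs_le.mp (hg i)
    exact (Set.Finite.pi (fun i => Set.finite_Icc _ _)).subset this
  have key : {x ∈ s | IsLatticePoint x} ⊆
      (fun g : Fin d → ℤ => (WithLp.toLp 2 (fun i => (g i : ℝ)) : EuclideanSpace ℝ (Fin d))) '' T := by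
    rintro x ⟨hxs, hxl⟩
    choose g hg using hxl
    refine ⟨g, ?_, ?_⟩
    · intro i
      have hx : ‖x‖ < R := by simpa using hR hxs
      have hcoord : |x i| ≤ ‖x‖ := by
        have := EuclideanSpace.norm_eq x
        have h1 : |x i| = Real.sqrt ((x i)^2) := by
          rw [Real.sqrt_sq_eq_abs]
        rw [h1, this]
        apply Real.sqrt_le_sqrt
        have : (x i)^2 ≤ ∑ j, ‖x j‖^2 :=
          Finset.single_le_sum (f := fun j => ‖x j‖^2)
            (fun j _ => by positivity) (Finset.mem_univ i) |>.trans_eq' (by simp [sq_abs])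
        exact this
      have : |(g i : ℝ)| ≤ R := by
        rw [← hg]; exact hcoord.trans hx.le
      have : ((|g i| : ℤ) : ℝ) ≤ (⌈R⌉ : ℝ) := by
        push_cast
        exact this.trans (Int.le_ceil R)
      exact_mod_cast this
    · refine PiLp.ext fun i => ?_
      exact (hg i).symm
  exact (hTfin.image _).subset key

lemma polarDual_convex : Convex ℝ (polarDual P) := by
  intro y₁ h1 y₂ h2 a b ha hb hab
  intro x hx
  have e : ⟪x, a • y₁ + b • y₂⟫ = a * ⟪x, y₁⟫ + b * ⟪x, y₂⟫ := by
    rw [inner_add_right, real_inner_smul_right, real_inner_smul_right]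
  rw [e]
  calc a * ⟪x, y₁⟫ + b * ⟪x, y₂⟫ ≤ a * 1 + b * 1 := by
        gcongr; exacts [h1 x hx, h2 x hx]
    _ = 1 := by rw [mul_one, mul_one, hab]

lemma polarDual_closed : IsClosed (polarDual P) := by
  have : polarDual P = ⋂ x ∈ P, {y | ⟪x, y⟫ ≤ 1} := by
    ext y; simp [polarDual, Set.mem_iInter]
  rw [this]
  exact isClosed_biInter fun x _ =>
    isClosed_le (Continuous.inner continuous_const continuous_id) continuous_const

lemma polarDual_zero_mem : (0 : EuclideanSpace ℝ (Fin d)) ∈ polarDual P := by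
  intro x _; rw [inner_zero_right]; norm_num

lemma polarDual_bounded (h0 : 0 ∈ interior P) : Bornology.IsBounded (polarDual P) := by
  obtain ⟨ε, hε, hball⟩ := Metric.isOpen_iff.mp isOpen_interior 0 h0
  refine Metric.isBounded_iff_subset_closedBall 0 |>.mpr ⟨2/ε, fun y hy => ?_⟩
  simp only [Metric.mem_closedBall, dist_zero_right]
  rcases eq_or_ne y 0 with rfl | hy0
  · simp only [norm_zero]; positivity
  · have hxP : (ε/2 / ‖y‖) • y ∈ P := by
      apply interior_subset
      apply hball
      simp only [Metric.mem_ball, dist_zero_right, norm_smul]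
      rw [Real.norm_eq_abs, abs_of_pos (by have := norm_pos_iff.mpr hy0; positivity)]
      rw [div_mul_cancel₀ _ (norm_ne_zero_iff.mpr hy0)]
      linarith
    have := hy _ hxP
    rw [real_inner_smul_left, real_inner_self_eq_norm_sq] at this
    have hyn : 0 < ‖y‖ := norm_pos_iff.mpr hy0
    rw [div_mul_eq_mul_div, sq, mul_div_assoc, mul_div_cancel_left₀ _ hyn.ne'] at this
    rw [le_div_iff₀ hε]
    nlinarith

lemma mem_of_forall_polarDual_inner_le (hconv : Convex ℝ P) (hcl : IsClosed P) (h0 : (0:EuclideanSpace ℝ (Fin d)) ∈ P)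
    {x : EuclideanSpace ℝ (Fin d)} (hx : ∀ y ∈ polarDual P, ⟪x, y⟫ ≤ 1) : x ∈ P := by
  by_contra hxP
  obtain ⟨f, u, hfP, hfx⟩ := geometric_hahn_banach_closed_point hconv hcl hxP
  have hu : 0 < u := by simpa using hfP 0 h0
  set yf := (InnerProductSpace.toDual ℝ (EuclideanSpace ℝ (Fin d))).symm f with hyf
  have hf : ∀ w, f w = ⟪yf, w⟫ := by
    intro w
    rw [hyf]
    simp [InnerProductSpace.toDual_symm_apply]
  have hyQ : u⁻¹ • yf ∈ polarDual P := by
    intro a ha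
    rw [real_inner_smul_right, real_inner_comm, ← hf]
    rw [inv_mul_le_iff₀ hu, mul_one]
    exact (hfP a ha).le
  have := hx _ hyQ
  rw [real_inner_smul_right, real_inner_comm, ← hf] at this
  rw [inv_mul_le_iff₀ hu, mul_one] at this
  linarith

lemma bddAbove_inner_image (hQ : Bornology.IsBounded Q) (x : EuclideanSpace ℝ (Fin d)) :
    BddAbove ((fun y => ⟪x, y⟫) '' Q) := by
  obtain ⟨R, hR⟩ := hQ.subset_closedBall 0
  refine ⟨‖x‖ * R, ?_⟩
  rintro r ⟨y, hy, rfl⟩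
  have h1 : ⟪x, y⟫ ≤ ‖x‖ * ‖y‖ := real_inner_le_norm x y
  have h2 : ‖y‖ ≤ R := by simpa using hR hy
  have hR0 : 0 ≤ R := le_trans (norm_nonneg y) h2
  calc ⟪x, y⟫ ≤ ‖x‖ * ‖y‖ := h1
    _ ≤ ‖x‖ * R := by gcongr

lemma le_suppF (hQ : Bornology.IsBounded Q) {y : EuclideanSpace ℝ (Fin d)} (hy : y ∈ Q) :
    ⟪x, y⟫ ≤ suppF Q x :=
  le_csSup (bddAbove_inner_image hQ x) ⟨y, hy, rfl⟩

lemma suppF_le_iff (hQne : Q.Nonempty) (hQ : Bornology.IsBounded Q) {r : ℝ} :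
    suppF Q x ≤ r ↔ ∀ y ∈ Q, ⟪x, y⟫ ≤ r := by
  rw [suppF, csSup_le_iff (bddAbove_inner_image hQ x) (hQne.image _)]
  constructor
  · intro h y hy; exact h _ ⟨y, hy, rfl⟩
  · rintro h b ⟨y, hy, rfl⟩; exact h y hy

lemma suppF_nonneg (hQ : Bornology.IsBounded Q) (h0 : (0:EuclideanSpace ℝ (Fin d)) ∈ Q) :
    0 ≤ suppF Q x := by
  have := le_suppF (x := x) hQ h0
  rwa [inner_zero_right] at this

lemma mem_smul_iff_suppF_le (hPconv : Convex ℝ P) (hPcl : IsClosed P)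
    (h0 : 0 ∈ interior P) {r : ℝ} (hr : 0 < r) :
    x ∈ r • P ↔ suppF (polarDual P) x ≤ r := by
  have hQbdd := polarDual_bounded h0
  have hQne : (polarDual P).Nonempty := ⟨0, polarDual_zero_mem⟩
  constructor
  · rintro ⟨p, hp, rfl⟩
    rw [suppF_le_iff hQne hQbdd]
    intro y hy
    rw [real_inner_smul_left]
    calc r * ⟪p, y⟫ ≤ r * 1 := by gcongr; exact hy p hp
      _ = r := mul_one r
  · intro h
    rw [Set.mem_smul_set_iff_inv_smul_mem₀ hr.ne']
    apply mem_of_forall_polarDual_inner_le hPconv hPcl (interior_subset h0)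
    intro y hy
    rw [real_inner_smul_left]
    have := (le_suppF hQbdd hy : ⟪x, y⟫ ≤ _).trans h
    rw [inv_mul_le_iff₀ hr, mul_one]
    exact this

lemma smul_subset_interior (hPconv : Convex ℝ P) (h0 : 0 ∈ interior P) {t : ℝ}
    (ht0 : 0 ≤ t) (ht1 : t < 1) : t • P ⊆ interior P := by
  rintro _ ⟨p, hp, rfl⟩
  have := hPconv.combo_interior_self_mem_interior h0 hp
    (by linarith : (0:ℝ) < 1 - t) ht0 (by ring)
  simpa using this

lemma mem_interior_smul_iff_suppF_lt (hPconv : Convex ℝ P) (hPcl : IsClosed P)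
    (h0 : 0 ∈ interior P) {r : ℝ} (hr : 0 < r) :
    x ∈ interior (r • P) ↔ suppF (polarDual P) x < r := by
  have hQbdd := polarDual_bounded h0
  have hQne : (polarDual P).Nonempty := ⟨0, polarDual_zero_mem⟩
  constructor
  · intro hx
    set g : ℝ → EuclideanSpace ℝ (Fin d) := fun t => t • x with hg
    have hgc : Continuous g := continuous_id.smul continuous_const
    have hU : IsOpen (g ⁻¹' interior (r • P)) := (isOpen_interior).preimage hgc
    have h1 : (1:ℝ) ∈ g ⁻¹' interior (r • P) := by simpa [hg] using hx
    obtain ⟨ε, hε, hball⟩ := Metric.isOpen_iff.mp hU 1 h1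
    set t := 1 + ε/2 with htdef
    have htmem : g t ∈ interior (r • P) := hball (by
      simp only [Metric.mem_ball, Real.dist_eq, htdef]
      rw [add_sub_cancel_left, abs_of_pos (by positivity)]
      linarith)
    have ht1 : (1:ℝ) < t := by rw [htdef]; linarith
    have hsupp : suppF (polarDual P) (t • x) ≤ r := by
      rw [← mem_smul_iff_suppF_le hPconv hPcl h0 hr]
      exact interior_subset htmem
    rw [suppF_le_iff hQne hQbdd] at hsupp
    have : suppF (polarDual P) x ≤ r / t := by
      rw [suppF_le_iff hQne hQbdd]
      intro y hy
      have := hsupp y hy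
      rw [real_inner_smul_left] at this
      rw [le_div_iff₀ (by linarith : (0:ℝ) < t), mul_comm]
      exact this
    calc suppF (polarDual P) x ≤ r / t := this
      _ < r := by
        rw [div_lt_iff₀ (by linarith : (0:ℝ) < t)]
        nlinarith
  · intro hx
    have hs0 : 0 ≤ suppF (polarDual P) x := suppF_nonneg hQbdd polarDual_zero_mem
    set s := (suppF (polarDual P) x + r)/2 with hs
    have hs1 : 0 < s := by rw [hs]; linarith
    have hs2 : s < r := by rw [hs]; linarith
    have hxs : x ∈ s • P := by
      rw [mem_smul_iff_suppF_le hPconv hPcl h0 hs1, hs]; linarith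
    have hsub : s • P ⊆ interior (r • P) := by
      rw [interior_smul₀ hr.ne']
      have : s • P = r • ((s/r) • P) := by
        rw [smul_smul]
        rw [mul_div_cancel₀ _ hr.ne']
      rw [this]
      apply Set.smul_set_mono
      exact smul_subset_interior hPconv h0 (by positivity) (by rw [div_lt_one hr]; exact hs2)
    exact hsub hxs

lemma suppF_zero_eq (hQne : (polarDual P).Nonempty) : suppF (polarDual P) (0 : EuclideanSpace ℝ (Fin d)) = 0 := by
  have : (fun y => ⟪(0 : EuclideanSpace ℝ (Fin d)), y⟫) '' polarDual P = {0} := by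
    ext r
    simp only [inner_zero_left, Set.mem_image, Set.mem_singleton_iff]
    constructor
    · rintro ⟨y, _, rfl⟩; rfl
    · rintro rfl; exact ⟨_, hQne.some_mem, rfl⟩
  rw [suppF, this, csSup_singleton]

lemma eq_zero_of_suppF_le_zero (hPconv : Convex ℝ P) (hPcl : IsClosed P)
    (hPbdd : Bornology.IsBounded P) (h0 : 0 ∈ interior P)
    (hx : suppF (polarDual P) x ≤ 0) : x = 0 := by
  have hQbdd := polarDual_bounded h0
  have hmem : ∀ t : ℝ, 0 < t → t • x ∈ P := by
    intro t ht
    apply mem_of_forall_polarDual_inner_le hPconv hPcl (interior_subset h0)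
    intro y hy
    rw [real_inner_smul_left]
    have h1 : ⟪x, y⟫ ≤ 0 := (le_suppF hQbdd hy).trans hx
    nlinarith
  obtain ⟨R, hR⟩ := hPbdd.subset_closedBall 0
  by_contra hx0
  have hnx : 0 < ‖x‖ := norm_pos_iff.mpr hx0
  set t := (|R| + 1) / ‖x‖ with ht
  have h1 := hR (hmem t (by positivity))
  simp only [Metric.mem_closedBall, dist_zero_right, norm_smul, Real.norm_eq_abs] at h1
  rw [ht, abs_of_pos (by positivity), div_mul_cancel₀ _ hnx.ne'] at h1
  have : R ≤ |R| := le_abs_self R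
  linarith

lemma zero_smul_P (h0 : 0 ∈ interior P) : (0:ℝ) • P = ({0} : Set (EuclideanSpace ℝ (Fin d))) := by
  rw [Set.zero_smul_set ⟨0, interior_subset h0⟩]
  rfl

lemma subset_ST (hPconv : Convex ℝ P) (hPcl : IsClosed P) (hPbdd : Bornology.IsBounded P)
    (h0 : 0 ∈ interior P) (n : ℕ) :
    {x ∈ (n : ℝ) • P | IsLatticePoint x} ⊆
      {x ∈ interior (((n : ℝ) + 1) • P) | IsLatticePoint x} := by
  rintro x ⟨hx, hlat⟩
  refine ⟨?_, hlat⟩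
  rw [mem_interior_smul_iff_suppF_lt hPconv hPcl h0 (by positivity)]
  rcases Nat.eq_zero_or_pos n with rfl | hn
  · rw [Nat.cast_zero, zero_smul_P h0] at hx
    simp only [Set.mem_singleton_iff] at hx
    subst hx
    rw [suppF_zero_eq ⟨0, polarDual_zero_mem⟩]
    norm_num
  · rw [mem_smul_iff_suppF_le hPconv hPcl h0 (by exact_mod_cast hn)] at hx
    linarith

lemma T_finite (hPbdd : Bornology.IsBounded P) (n : ℕ) :
    {x ∈ interior (((n : ℝ) + 1) • P) | IsLatticePoint x}.Finite := by
  apply Set.Finite.subset (finite_lattice_of_bounded (hPbdd.smul₀ ((n:ℝ)+1)))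
  intro x hx
  exact ⟨interior_subset hx.1, hx.2⟩

theorem key_equiv (hPconv : Convex ℝ P) (hPcl : IsClosed P) (hPbdd : Bornology.IsBounded P)
    (h0 : 0 ∈ interior P) :
    (∀ n : ℕ,
      Set.ncard {x ∈ (n : ℝ) • P | IsLatticePoint x} =
      Set.ncard {x ∈ interior (((n : ℝ) + 1) • P) | IsLatticePoint x}) ↔
    (∀ x : EuclideanSpace ℝ (Fin d), IsLatticePoint x → ∃ z : ℕ, suppF (polarDual P) x = z) := by
  have hQbdd := polarDual_bounded h0
  have hQne : (polarDual P).Nonempty := ⟨0, polarDual_zero_mem⟩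
  constructor
  · intro hcard x hlat
    have hs0 : 0 ≤ suppF (polarDual P) x := suppF_nonneg hQbdd polarDual_zero_mem
    set n := ⌊suppF (polarDual P) x⌋₊ with hn
    have hlt : suppF (polarDual P) x < n + 1 := Nat.lt_floor_add_one _
    have hxT : x ∈ {x ∈ interior (((n : ℝ) + 1) • P) | IsLatticePoint x} := by
      refine ⟨?_, hlat⟩
      rw [mem_interior_smul_iff_suppF_lt hPconv hPcl h0 (by positivity)]
      exact hlt
    have hST := subset_ST hPconv hPcl hPbdd h0 n
    have heq : {x ∈ (n : ℝ) • P | IsLatticePoint x} =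
        {x ∈ interior (((n : ℝ) + 1) • P) | IsLatticePoint x} :=
      Set.eq_of_subset_of_ncard_le hST (le_of_eq (hcard n).symm) (T_finite hPbdd n)
    rw [← heq] at hxT
    obtain ⟨hxS, -⟩ := hxT
    rcases Nat.eq_zero_or_pos n with h | hpos
    · rw [h, Nat.cast_zero, zero_smul_P h0] at hxS
      simp only [Set.mem_singleton_iff] at hxS
      subst hxS
      exact ⟨0, by rw [suppF_zero_eq hQne]; norm_num⟩
    · rw [mem_smul_iff_suppF_le hPconv hPcl h0 (by exact_mod_cast hpos)] at hxS
      refine ⟨n, le_antisymm hxS ?_⟩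
      rw [hn]
      exact Nat.floor_le hs0
  · intro hint n
    congr 1
    apply Set.Subset.antisymm (subset_ST hPconv hPcl hPbdd h0 n)
    rintro x ⟨hx, hlat⟩
    refine ⟨?_, hlat⟩
    rw [mem_interior_smul_iff_suppF_lt hPconv hPcl h0 (by positivity)] at hx
    obtain ⟨z, hz⟩ := hint x hlat
    have hzn : (z : ℝ) ≤ n := by
      rw [hz] at hx
      have : z < n + 1 := by exact_mod_cast hx
      exact_mod_cast Nat.lt_succ_iff.mp this
    rcases Nat.eq_zero_or_pos n with rfl | hpos
    · have : suppF (polarDual P) x ≤ 0 := by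
        rw [hz]; exact_mod_cast hzn
      have hx0 := eq_zero_of_suppF_le_zero hPconv hPcl hPbdd h0 this
      subst hx0
      rw [Nat.cast_zero, zero_smul_P h0]
      rfl
    · rw [mem_smul_iff_suppF_le hPconv hPcl h0 (by exact_mod_cast hpos), hz]
      exact hzn

-- uniqueness from spanning active constraints
lemma eq_of_inner_eq_span {S : Set (EuclideanSpace ℝ (Fin d))}
    (hspan : Submodule.span ℝ S = ⊤) {a b : EuclideanSpace ℝ (Fin d)}
    (h : ∀ v ∈ S, ⟪v, a⟫ = ⟪v, b⟫) : a = b := by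
  have hmem : a - b ∈ (Submodule.span ℝ S)ᗮ := by
    rw [Submodule.mem_orthogonal]
    intro u hu
    induction hu using Submodule.span_induction with
    | mem v hv => rw [inner_sub_right, h v hv, sub_self]
    | zero => rw [inner_zero_left]
    | add u w _ _ hu hw => rw [inner_add_left, hu, hw, add_zero]
    | smul c u _ hu => rw [inner_smul_left, hu, mul_zero]
  rw [hspan, Submodule.top_orthogonal_eq_bot] at hmem
  exact sub_eq_zero.mp (Submodule.mem_bot ℝ |>.mp hmem)

-- span of active constraints at an extreme point is everything
lemma span_active_of_extreme {V : Finset (EuclideanSpace ℝ (Fin d))}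
    {Q : Set (EuclideanSpace ℝ (Fin d))}
    (hQ : Q = {y | ∀ v ∈ V, ⟪v, y⟫ ≤ 1}) {a : EuclideanSpace ℝ (Fin d)}
    (ha : a ∈ Q.extremePoints ℝ) :
    Submodule.span ℝ {v : EuclideanSpace ℝ (Fin d) | v ∈ V ∧ ⟪v, a⟫ = 1} = ⊤ := by
  classical
  obtain ⟨haQ, hext⟩ := mem_extremePoints.mp ha
  by_contra hne
  set K := Submodule.span ℝ {v : EuclideanSpace ℝ (Fin d) | v ∈ V ∧ ⟪v, a⟫ = 1} with hK
  have hKbot : Kᗮ ≠ ⊥ := fun h => hne (Submodule.orthogonal_eq_bot_iff.mp h)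
  obtain ⟨z, hzK, hz0⟩ := Submodule.exists_mem_ne_zero_of_ne_bot hKbot
  have hzv : ∀ v ∈ V, ⟪v, a⟫ = 1 → ⟪v, z⟫ = 0 := fun v hv h1 =>
    Submodule.inner_right_of_mem_orthogonal (Submodule.subset_span (show v ∈ {v : EuclideanSpace ℝ (Fin d) | v ∈ V ∧ ⟪v, a⟫ = 1} from ⟨hv, h1⟩)) hzK
  obtain ⟨ε, hε0, hε⟩ : ∃ ε : ℝ, 0 < ε ∧ ∀ v ∈ V, ⟪v, a⟫ ≠ 1 → ⟪v, a⟫ + ε * |⟪v, z⟫| < 1 := by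
    set W' := V.filter (fun v => ⟪v, a⟫ ≠ 1) with hW'
    have hlt : ∀ v ∈ W', ⟪v, a⟫ < 1 := by
      intro v hv
      obtain ⟨hv1, hv2⟩ := Finset.mem_filter.mp hv
      rw [hQ] at haQ
      exact lt_of_le_of_ne (haQ v hv1) hv2
    rcases W'.eq_empty_or_nonempty with he | hne'
    · refine ⟨1, one_pos, fun v hv hv1 => absurd ?_ (by simp [he] : v ∉ W')⟩
      exact Finset.mem_filter.mpr ⟨hv, hv1⟩
    · set ε := (W'.image fun v => (1 - ⟪v, a⟫) / (1 + |⟪v, z⟫|)).min' (hne'.image _) with hεdef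
      have hεmem := (W'.image fun v => (1 - ⟪v, a⟫) / (1 + |⟪v, z⟫|)).min'_mem (hne'.image _)
      rw [Finset.mem_image] at hεmem
      obtain ⟨v₀, hv₀, hv₀e⟩ := hεmem
      have hε0 : 0 < ε := by
        rw [hεdef, ← hv₀e]
        have := hlt v₀ hv₀
        have h2 : (0:ℝ) < 1 + |⟪v₀, z⟫| := by positivity
        apply div_pos <;> linarith
      refine ⟨ε, hε0, fun v hv hv1 => ?_⟩
      have hvW : v ∈ W' := Finset.mem_filter.mpr ⟨hv, hv1⟩
      have hle : ε ≤ (1 - ⟪v, a⟫) / (1 + |⟪v, z⟫|) :=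
        Finset.min'_le _ _ (Finset.mem_image_of_mem _ hvW)
      have h2 : (0:ℝ) < 1 + |⟪v, z⟫| := by positivity
      rw [le_div_iff₀ h2] at hle
      nlinarith [abs_nonneg ⟪v, z⟫]
  have hmem : ∀ s : ℝ, |s| ≤ ε → a + s • z ∈ Q := by
    intro s hs
    rw [hQ]
    intro v hv
    rw [inner_add_right, real_inner_smul_right]
    by_cases h1 : ⟪v, a⟫ = 1
    · rw [h1, hzv v hv h1, mul_zero, add_zero]
    · have := hε v hv h1
      have habs : s * ⟪v, z⟫ ≤ ε * |⟪v, z⟫| := by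
        calc s * ⟪v, z⟫ ≤ |s * ⟪v, z⟫| := le_abs_self _
          _ = |s| * |⟪v, z⟫| := abs_mul _ _
          _ ≤ ε * |⟪v, z⟫| := by gcongr
      linarith
  have h1 : a + ε • z ∈ Q := hmem ε (by rw [abs_of_pos hε0])
  have h2 : a + (-ε) • z ∈ Q := hmem (-ε) (by rw [abs_neg, abs_of_pos hε0])
  have hseg : a ∈ openSegment ℝ (a + ε • z) (a + (-ε) • z) := by
    refine ⟨1/2, 1/2, by norm_num, by norm_num, by norm_num, ?_⟩
    module
  have := (hext _ h1 _ h2 hseg).1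
  have hz : ε • z = 0 := by
    have := congrArg (· - a) this
    simpa [add_sub_cancel_left] using this
  exact hz0 (by simpa [hε0.ne'] using smul_eq_zero.mp hz)

-- finiteness of extreme points
lemma extremePoints_finite {V : Finset (EuclideanSpace ℝ (Fin d))}
    {Q : Set (EuclideanSpace ℝ (Fin d))}
    (hQ : Q = {y | ∀ v ∈ V, ⟪v, y⟫ ≤ 1}) : (Q.extremePoints ℝ).Finite := by
  classical
  set f : EuclideanSpace ℝ (Fin d) → Finset (EuclideanSpace ℝ (Fin d)) :=
    fun a => V.filter (fun v => ⟪v, a⟫ = 1) with hf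
  have hinj : Set.InjOn f (Q.extremePoints ℝ) := by
    intro a ha b hb hab
    have hspa := span_active_of_extreme hQ ha
    have hset : {v : EuclideanSpace ℝ (Fin d) | v ∈ V ∧ ⟪v, a⟫ = 1} = ↑(f a) := by
      ext v; simp [hf]
    rw [hset] at hspa
    apply eq_of_inner_eq_span hspa
    intro v hv
    have hva : v ∈ f a := hv
    have hvb : v ∈ f b := by rw [← hab]; exact hv
    rw [(Finset.mem_filter.mp hva).2, (Finset.mem_filter.mp hvb).2]
  have himg : f '' (Q.extremePoints ℝ) ⊆ ↑V.powerset := by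
    rintro _ ⟨a, _, rfl⟩
    simp only [Finset.coe_powerset, Set.mem_preimage, Set.mem_powerset_iff,
      Finset.mem_coe, Finset.mem_powerset]
    exact Finset.filter_subset _ _
  exact Set.Finite.of_finite_image (V.powerset.finite_toSet.subset himg) hinj

lemma inner_le_on_convexHull {s : Set (EuclideanSpace ℝ (Fin d))}
    {x : EuclideanSpace ℝ (Fin d)} {c : ℝ} (h : ∀ w ∈ s, ⟪x, w⟫ ≤ c) :
    ∀ y ∈ convexHull ℝ s, ⟪x, y⟫ ≤ c := by
  intro y hy
  have hconv : Convex ℝ {y : EuclideanSpace ℝ (Fin d) | ⟪x, y⟫ ≤ c} := by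
    intro y₁ h1 y₂ h2 a b ha hb hab
    simp only [Set.mem_setOf_eq] at h1 h2 ⊢
    rw [inner_add_right, real_inner_smul_right, real_inner_smul_right]
    calc a * ⟪x, y₁⟫ + b * ⟪x, y₂⟫ ≤ a * c + b * c := by gcongr
      _ = c := by rw [← add_mul, hab, one_mul]
  exact convexHull_min h hconv hy

lemma polarDual_convexHull_finset (V : Finset (EuclideanSpace ℝ (Fin d))) :
    polarDual (convexHull ℝ (V : Set (EuclideanSpace ℝ (Fin d)))) =
      {y | ∀ v ∈ V, ⟪v, y⟫ ≤ 1} := by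
  ext y
  constructor
  · intro hy v hv
    exact hy v (subset_convexHull ℝ _ hv)
  · intro hy x hx
    rw [real_inner_comm]
    refine inner_le_on_convexHull ?_ x hx
    intro w hw
    rw [real_inner_comm]
    exact hy w hw

lemma Q_eq_convexHull_extremePoints {V : Finset (EuclideanSpace ℝ (Fin d))}
    {P : Set (EuclideanSpace ℝ (Fin d))} (hP : P = convexHull ℝ (V : Set _))
    (h0 : 0 ∈ interior P) :
    polarDual P = convexHull ℝ ((polarDual P).extremePoints ℝ) := by
  have hQcomp : IsCompact (polarDual P) :=
    Metric.isCompact_of_isClosed_isBounded polarDual_closed (polarDual_bounded h0)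
  have hfin : ((polarDual P).extremePoints ℝ).Finite :=
    extremePoints_finite (by rw [hP, polarDual_convexHull_finset])
  have hKM := closure_convexHull_extremePoints hQcomp polarDual_convex
  have hcl : IsClosed (convexHull ℝ ((polarDual P).extremePoints ℝ)) :=
    (hfin.isCompact_convexHull ℝ).isClosed
  conv_lhs => rw [← hKM]
  exact hcl.closure_eq

lemma exists_rational_close (x₀ : EuclideanSpace ℝ (Fin d)) {ε : ℝ} (hε : 0 < ε) :
    ∃ x₁ : EuclideanSpace ℝ (Fin d), IsRationalPoint x₁ ∧ ‖x₁ - x₀‖ < ε := by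
  set ε' : ℝ := ε / (2 * (d + 1)) with hε'
  have hε'0 : 0 < ε' := by positivity
  have hq : ∀ i : Fin d, ∃ q : ℚ, x₀ i < (q:ℝ) ∧ (q:ℝ) < x₀ i + ε' := fun i =>
    exists_rat_btwn (by linarith)
  choose q hq1 hq2 using hq
  set x₁ : EuclideanSpace ℝ (Fin d) := WithLp.toLp 2 (fun i => (q i : ℝ)) with hx₁
  refine ⟨x₁, fun i => ⟨q i, rfl⟩, ?_⟩
  have hbound : ∀ i, ‖(x₁ - x₀) i‖ ≤ ε' := by
    intro i
    rw [PiLp.sub_apply, Real.norm_eq_abs, abs_le]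
    have e : x₁ i = (q i : ℝ) := rfl
    rw [e]
    constructor <;> [linarith [hq1 i]; linarith [hq2 i]]
  have : ‖x₁ - x₀‖ ≤ ε / 2 := by
    rw [EuclideanSpace.norm_eq]
    have h1 : ∑ i, ‖(x₁ - x₀) i‖ ^ 2 ≤
        (d : ℝ) * ε' ^ 2 := by
      calc ∑ i, ‖(x₁ - x₀) i‖ ^ 2
          ≤ ∑ _i : Fin d, ε' ^ 2 := by
            apply Finset.sum_le_sum
            intro i _
            have := hbound i
            nlinarith [norm_nonneg ((x₁ - x₀) i)]
        _ = (d : ℝ) * ε' ^ 2 := by simp [Finset.sum_const]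
    have h2 : (d : ℝ) * ε' ^ 2 ≤ (ε/2) ^ 2 := by
      have : ε / 2 = (d + 1) * ε' := by rw [hε']; field_simp
      rw [this]
      have hd : (d : ℝ) ≤ (d+1)^2 := by nlinarith [Nat.cast_nonneg (α := ℝ) d]
      calc (d:ℝ) * ε' ^2 ≤ (d+1)^2 * ε'^2 := by nlinarith
        _ = ((d+1)*ε')^2 := by ring
    calc Real.sqrt (∑ i, ‖(x₁ - x₀) i‖ ^ 2)
        ≤ Real.sqrt ((ε/2)^2) := Real.sqrt_le_sqrt (h1.trans h2)
      _ = ε/2 := Real.sqrt_sq (by positivity)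
  linarith

lemma exists_nat_smul_lattice {x : EuclideanSpace ℝ (Fin d)} (hx : IsRationalPoint x) :
    ∃ N : ℕ, 0 < N ∧ IsLatticePoint ((N : ℝ) • x) := by
  choose q hq using hx
  refine ⟨∏ i, (q i).den, Finset.prod_pos (fun i _ => (q i).pos), ?_⟩
  intro i
  refine ⟨(q i).num * ∏ j ∈ Finset.univ.erase i, ((q j).den : ℤ), ?_⟩
  have key : ((∏ j, (q j).den : ℕ) : ℚ) * q i =
      ((q i).num * ∏ j ∈ Finset.univ.erase i, ((q j).den : ℤ) : ℤ) := by
    have hsplit : (∏ j, (q j).den) = (q i).den * ∏ j ∈ Finset.univ.erase i, (q j).den :=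
      (Finset.mul_prod_erase Finset.univ (fun j => (q j).den) (Finset.mem_univ i)).symm
    rw [hsplit]
    push_cast
    have hden : ((q i).den : ℚ) * q i = (q i).num := by
      have hne : ((q i).den : ℚ) ≠ 0 := by exact_mod_cast (q i).den_nz
      rw [mul_comm, Rat.mul_den_eq_num]
    rw [mul_comm ((q i).den : ℚ) _, mul_assoc, hden]
    ring
  have : ((Finset.univ.prod fun i => (q i).den : ℕ) : ℝ) • x i = (((∏ j, (q j).den : ℕ) : ℚ) * q i : ℚ) := by
    rw [hq i, smul_eq_mul]
    push_cast
    ring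
  rw [PiLp.smul_apply, this, key]
  push_cast
  ring

lemma suppF_int_of_latticeHull {W : Finset (EuclideanSpace ℝ (Fin d))}
    (hWlat : ∀ w ∈ W, IsLatticePoint w)
    (hQW : polarDual P = convexHull ℝ (W : Set (EuclideanSpace ℝ (Fin d))))
    (h0 : 0 ∈ interior P) {x : EuclideanSpace ℝ (Fin d)} (hx : IsLatticePoint x) :
    ∃ z : ℕ, suppF (polarDual P) x = z := by
  classical
  have hQbdd := polarDual_bounded h0
  have hQne : (polarDual P).Nonempty := ⟨0, polarDual_zero_mem⟩
  have hWne : W.Nonempty := by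
    by_contra h
    rw [Finset.not_nonempty_iff_eq_empty] at h
    rw [h] at hQW
    simp only [Finset.coe_empty, convexHull_empty] at hQW
    exact hQne.ne_empty hQW
  set img := W.image (fun w => ⟪x, w⟫) with himg
  have himgne : img.Nonempty := hWne.image _
  obtain ⟨w₀, hw₀W, hw₀⟩ := Finset.mem_image.mp (img.max'_mem himgne)
  have heq : suppF (polarDual P) x = ⟪x, w₀⟫ := by
    apply le_antisymm
    · rw [suppF_le_iff hQne hQbdd]
      intro y hy
      rw [hQW] at hy
      refine inner_le_on_convexHull ?_ y hy
      intro w hw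
      rw [hw₀]
      exact Finset.le_max' _ _ (Finset.mem_image_of_mem _ hw)
    · apply le_suppF hQbdd
      rw [hQW]
      exact subset_convexHull ℝ _ hw₀W
  obtain ⟨z, hz⟩ := hx.inner_int (hWlat w₀ hw₀W)
  have hz0 : (0:ℝ) ≤ z := by
    rw [← hz, ← heq]
    exact suppF_nonneg hQbdd polarDual_zero_mem
  refine ⟨z.toNat, ?_⟩
  rw [heq, hz]
  congr 1
  exact (Int.toNat_of_nonneg (by exact_mod_cast hz0)).symm

lemma suppF_eq_inner_of_max {Ept : Set (EuclideanSpace ℝ (Fin d))}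
    (hQE : polarDual P = convexHull ℝ Ept) (h0 : 0 ∈ interior P)
    {a x : EuclideanSpace ℝ (Fin d)} (haQ : a ∈ polarDual P)
    (hmax : ∀ b ∈ Ept, ⟪x, b⟫ ≤ ⟪x, a⟫) : suppF (polarDual P) x = ⟪x, a⟫ := by
  have hQbdd := polarDual_bounded h0
  have hQne : (polarDual P).Nonempty := ⟨0, polarDual_zero_mem⟩
  apply le_antisymm
  · rw [suppF_le_iff hQne hQbdd]
    intro y hy
    rw [hQE] at hy
    exact inner_le_on_convexHull hmax y hy
  · exact le_suppF hQbdd haQ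

lemma extremePoint_lattice {P : Set (EuclideanSpace ℝ (Fin d))}
    (h0 : 0 ∈ interior P)
    (hEfin : ((polarDual P).extremePoints ℝ).Finite)
    (hQE : polarDual P = convexHull ℝ ((polarDual P).extremePoints ℝ))
    (hint : ∀ x : EuclideanSpace ℝ (Fin d), IsLatticePoint x →
      ∃ z : ℕ, suppF (polarDual P) x = z)
    {a : EuclideanSpace ℝ (Fin d)} (ha : a ∈ (polarDual P).extremePoints ℝ) :
    IsLatticePoint a := by
  classical
  have haQ : a ∈ polarDual P := extremePoints_subset ha
  set K := convexHull ℝ (((polarDual P).extremePoints ℝ) \ {a}) with hK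
  have hKQ : K ⊆ polarDual P := by
    rw [hQE, hK]
    exact convexHull_mono Set.diff_subset
  have haK : a ∉ K := by
    intro haK
    have h1 : a ∈ K.extremePoints ℝ :=
      inter_extremePoints_subset_extremePoints_of_subset hKQ ⟨haK, ha⟩
    have h2 := extremePoints_convexHull_subset h1
    exact h2.2 rfl
  have hKconv : Convex ℝ K := convex_convexHull _ _
  have hKcl : IsClosed K := ((hEfin.diff).isCompact_convexHull ℝ).isClosed
  obtain ⟨f, u, hfb, hfa⟩ := geometric_hahn_banach_closed_point hKconv hKcl haK
  set x₀ := (InnerProductSpace.toDual ℝ (EuclideanSpace ℝ (Fin d))).symm f with hx₀def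
  have hx₀ : ∀ w, ⟪x₀, w⟫ = f w := by
    intro w
    rw [hx₀def]
    simp [InnerProductSpace.toDual_symm_apply]
  set γ := f a - u with hγ
  have hγ0 : 0 < γ := by rw [hγ]; linarith
  have hgap : ∀ b ∈ ((polarDual P).extremePoints ℝ) \ {a}, γ < ⟪x₀, a - b⟫ := by
    intro b hb
    have := hfb b (subset_convexHull ℝ _ hb)
    rw [inner_sub_right, hx₀, hx₀, hγ]
    linarith
  set EF := hEfin.toFinset with hEF
  set D : ℝ := 1 + ∑ b ∈ EF, ‖a - b‖ with hD
  have hD1 : (1:ℝ) ≤ D := by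
    rw [hD]
    have : (0:ℝ) ≤ ∑ b ∈ EF, ‖a - b‖ :=
      Finset.sum_nonneg fun b _ => norm_nonneg _
    linarith
  have hD0 : (0:ℝ) < D := by linarith
  have hDb : ∀ b ∈ ((polarDual P).extremePoints ℝ) \ {a}, ‖a - b‖ ≤ D := by
    intro b hb
    have hbEF : b ∈ EF := hEfin.mem_toFinset.mpr hb.1
    rw [hD]
    have := Finset.single_le_sum (f := fun b => ‖a - b‖)
      (fun c _ => norm_nonneg _) hbEF
    linarith
  obtain ⟨x₁, hx₁rat, hx₁close⟩ := exists_rational_close x₀ (show (0:ℝ) < γ/(2*D) by positivity)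
  have hgap1 : ∀ b ∈ ((polarDual P).extremePoints ℝ) \ {a}, γ/2 < ⟪x₁, a - b⟫ := by
    intro b hb
    have h1 := hgap b hb
    have h2 : |⟪x₁ - x₀, a - b⟫| < γ/2 := by
      calc |⟪x₁ - x₀, a - b⟫| ≤ ‖x₁ - x₀‖ * ‖a - b‖ := abs_real_inner_le_norm _ _
        _ ≤ ‖x₁ - x₀‖ * D := by gcongr; exact hDb b hb
        _ < (γ/(2*D)) * D := by gcongr
        _ = γ/2 := by field_simp
    have h3 : ⟪x₁, a - b⟫ = ⟪x₀, a - b⟫ + ⟪x₁ - x₀, a - b⟫ := by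
      have hxx : x₁ = x₀ + (x₁ - x₀) := by module
      conv_lhs => rw [hxx, inner_add_left]
    rw [h3]
    have := abs_lt.mp h2
    linarith
  obtain ⟨N, hN0, hNlat⟩ := exists_nat_smul_lattice hx₁rat
  have hNr : (1:ℝ) ≤ N := by exact_mod_cast hN0
  intro i
  set e := EuclideanSpace.single i (1:ℝ) with he
  have hea : ⟪e, a⟫ = a i := by
    rw [he, EuclideanSpace.inner_single_left]
    simp
  have heb : ∀ b, |⟪e, a - b⟫| ≤ ‖a - b‖ := by
    intro b
    calc |⟪e, a - b⟫| ≤ ‖e‖ * ‖a - b‖ := abs_real_inner_le_norm _ _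
      _ = ‖a - b‖ := by rw [he, EuclideanSpace.norm_single]; simp
  obtain ⟨M, hM⟩ := exists_nat_ge (D / (N * (γ/2)))
  have hMb : D ≤ M * (N * (γ/2)) := by
    rw [div_le_iff₀ (by positivity)] at hM
    linarith
  set w := ((M:ℝ) * N) • x₁ with hw
  have hwlat : IsLatticePoint w := by
    have h := hNlat.nsmul M
    rw [smul_smul] at h
    exact h
  have hkey : ∀ b ∈ ((polarDual P).extremePoints ℝ) \ {a}, D ≤ ⟪w, a - b⟫ := by
    intro b hb
    rw [hw, real_inner_smul_left]
    have h1 := hgap1 b hb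
    have hM0 : (0:ℝ) ≤ M := Nat.cast_nonneg M
    have hN0' : (0:ℝ) ≤ N := Nat.cast_nonneg N
    nlinarith [h1, hMb, hγ0]
  have hmax1 : ∀ b ∈ ((polarDual P).extremePoints ℝ), ⟪w, b⟫ ≤ ⟪w, a⟫ := by
    intro b hb
    by_cases hba : b = a
    · rw [hba]
    · have := hkey b ⟨hb, hba⟩
      rw [inner_sub_right] at this
      linarith
  have hmax2 : ∀ b ∈ ((polarDual P).extremePoints ℝ), ⟪w + e, b⟫ ≤ ⟪w + e, a⟫ := by
    intro b hb
    by_cases hba : b = a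
    · rw [hba]
    · have h1 := hkey b ⟨hb, hba⟩
      have h2 := heb b
      have h3 := hDb b ⟨hb, hba⟩
      have habs := abs_le.mp h2
      rw [inner_add_left, inner_add_left]
      have h4 : ⟪w, b⟫ + ⟪w, a - b⟫ = ⟪w, a⟫ := by
        rw [inner_sub_right]; ring
      have h5 : ⟪e, a⟫ - ⟪e, b⟫ = ⟪e, a - b⟫ := by rw [inner_sub_right]
      nlinarith [h1, habs.1, h3]
  obtain ⟨z₁, hz₁⟩ := hint _ (hwlat.add (isLatticePoint_single i))
  obtain ⟨z₂, hz₂⟩ := hint _ hwlat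
  have e1 : suppF (polarDual P) (w + e) = ⟪w + e, a⟫ :=
    suppF_eq_inner_of_max hQE h0 haQ hmax2
  have e2 : suppF (polarDual P) w = ⟪w, a⟫ :=
    suppF_eq_inner_of_max hQE h0 haQ hmax1
  refine ⟨(z₁ : ℤ) - (z₂ : ℤ), ?_⟩
  have : a i = ⟪w + e, a⟫ - ⟪w, a⟫ := by
    rw [inner_add_left, hea]; ring
  rw [this, ← e1, ← e2, hz₁, hz₂]
  push_cast
  ring

end Helpers

/-- Hibi's theorem: for a full-dimensional rational convex polytope `P ⊆ ℝ^d` with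
`0 ∈ int P`, the polar dual `P*` is a lattice polytope if and only if
`#(nP ∩ ℤ^d) = #(int((n+1)P) ∩ ℤ^d)` for every `n ∈ ℕ`. -/
theorem stmt10 {d : ℕ} (V : Finset (EuclideanSpace ℝ (Fin d)))
    (hV : ∀ v ∈ V, IsRationalPoint v)
    (P : Set (EuclideanSpace ℝ (Fin d))) (hP : P = convexHull ℝ (V : Set _))
    (h0 : 0 ∈ interior P) :
    (∃ W : Finset (EuclideanSpace ℝ (Fin d)), (∀ w ∈ W, IsLatticePoint w) ∧
        polarDual P = convexHull ℝ (W : Set _)) ↔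
    (∀ n : ℕ,
      Set.ncard {x ∈ (n : ℝ) • P | IsLatticePoint x} =
      Set.ncard {x ∈ interior (((n : ℝ) + 1) • P) | IsLatticePoint x}) := by
  have hPconv : Convex ℝ P := hP ▸ convex_convexHull ℝ _
  have hPcomp : IsCompact P := hP ▸ V.finite_toSet.isCompact_convexHull ℝ
  have hPcl : IsClosed P := hPcomp.isClosed
  have hPbdd : Bornology.IsBounded P := hPcomp.isBounded
  rw [key_equiv hPconv hPcl hPbdd h0]
  constructor
  · rintro ⟨W, hWlat, hQW⟩ x hx
    exact suppF_int_of_latticeHull hWlat hQW h0 hx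
  · intro hint
    have hQE := Q_eq_convexHull_extremePoints hP h0
    have hEfin : ((polarDual P).extremePoints ℝ).Finite :=
      extremePoints_finite (by rw [hP, polarDual_convexHull_finset])
    refine ⟨hEfin.toFinset, ?_, ?_⟩
    · intro w hw
      exact extremePoint_lattice h0 hEfin hQE hint (hEfin.mem_toFinset.mp hw)
    · rw [hEfin.coe_toFinset]
      exact hQE
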